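/- arXiv:math/0402093 — 2 statements merged into one kernel-verified Lean document; each statement's English description precedes it below -/
import Mathlib

section
/- Let 0 < q < 1 and s_1, s_2 > 1 real. Then \zeta[s_1]\zeta[s_2] = \zeta[s_1,s_2] + \zeta[s_2,s_1] + \zeta[s_1+s_2] + (1-q)\zeta[s_1+s_2-1], so in particular \zeta[s_1,s_2] + \zeta[s_2,s_1] can be expressed in terms of depth-1 q-zeta values. -/
noncomputable def qnum (q : ℝ) (k : ℕ) : ℝ := (1 - q ^ k) / (1 - q)

noncomputable def qzeta (q s : ℝ) : ℝ :=
  ∑' k : ℕ+, q ^ ((s - 1) * ((k : ℕ) : ℝ)) / (qnum q k) ^ s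

noncomputable def qzeta2 (q s₁ s₂ : ℝ) : ℝ :=
  ∑' p : {p : ℕ × ℕ // p.2 < p.1 ∧ 0 < p.2},
    q ^ ((s₁ - 1) * (p.1.1 : ℝ) + (s₂ - 1) * (p.1.2 : ℝ)) /
      ((qnum q p.1.1) ^ s₁ * (qnum q p.1.2) ^ s₂)

noncomputable def fq (q s : ℝ) (k : ℕ) : ℝ := q ^ ((s - 1) * (k : ℝ)) / qnum q k ^ s

section aux
variable {q : ℝ}

lemma qnum_pos (hq0 : 0 < q) (hq1 : q < 1) {k : ℕ} (hk : 0 < k) : 0 < qnum q k := by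
  have h1 : q ^ k < 1 := pow_lt_one₀ hq0.le hq1 hk.ne'
  exact div_pos (by linarith) (by linarith)

lemma one_le_qnum (hq0 : 0 < q) (hq1 : q < 1) {k : ℕ} (hk : 0 < k) : 1 ≤ qnum q k := by
  have hqk : q ^ k ≤ q := by
    calc q ^ k ≤ q ^ 1 := pow_le_pow_of_le_one hq0.le hq1.le hk
    _ = q := pow_one q
  rw [qnum, le_div_iff₀ (by linarith)]
  linarith

lemma qnum_nonneg (hq0 : 0 < q) (hq1 : q < 1) (k : ℕ) : 0 ≤ qnum q k := by
  rcases Nat.eq_zero_or_pos k with h | h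
  · simp [h, qnum]
  · exact (qnum_pos hq0 hq1 h).le

lemma fq_nonneg (hq0 : 0 < q) (hq1 : q < 1) (s : ℝ) (k : ℕ) : 0 ≤ fq q s k :=
  div_nonneg (Real.rpow_nonneg hq0.le _) (Real.rpow_nonneg (qnum_nonneg hq0 hq1 k) _)

lemma fq_zero {s : ℝ} (hs : s ≠ 0) : fq q s 0 = 0 := by
  simp [fq, qnum, Real.zero_rpow hs]

lemma summable_fq (hq0 : 0 < q) (hq1 : q < 1) {s : ℝ} (hs : 1 < s) : Summable (fq q s) := by
  have hr0 : (0:ℝ) ≤ q ^ (s - 1) := Real.rpow_nonneg hq0.le _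
  have hr1 : q ^ (s - 1) < 1 := Real.rpow_lt_one hq0.le hq1 (by linarith)
  refine Summable.of_nonneg_of_le (fq_nonneg hq0 hq1 s) (fun k => ?_)
    (summable_geometric_of_lt_one hr0 hr1)
  have hpow : (q ^ (s - 1)) ^ k = q ^ ((s - 1) * (k : ℝ)) := by
    rw [← Real.rpow_natCast (q ^ (s - 1)) k, ← Real.rpow_mul hq0.le]
  rcases Nat.eq_zero_or_pos k with h | h
  · simp [h, fq_zero (by linarith : s ≠ 0)]
  · rw [hpow]
    have hd : 1 ≤ qnum q k ^ s :=
      Real.one_le_rpow (one_le_qnum hq0 hq1 h) (by linarith)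
    calc fq q s k ≤ q ^ ((s - 1) * (k : ℝ)) / 1 := by
          apply div_le_div_of_nonneg_left (Real.rpow_nonneg hq0.le _) one_pos hd
      _ = q ^ ((s - 1) * (k : ℝ)) := div_one _

lemma qzeta_eq {s : ℝ} (hs : s ≠ 0) : qzeta q s = ∑' k : ℕ, fq q s k := by
  rw [qzeta]
  refine Function.Injective.tsum_eq (g := ((↑) : ℕ+ → ℕ)) (f := fq q s)
    (fun a b h => PNat.coe_injective h) (fun k hk => ?_)
  rcases Nat.eq_zero_or_pos k with h | h
  · exact absurd (h ▸ fq_zero hs) hk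
  · exact ⟨⟨k, h⟩, rfl⟩

lemma diag_eq (q s₁ s₂ : ℝ) (hq0 : 0 < q) (hq1 : q < 1) (h₁ : 1 < s₁) (h₂ : 1 < s₂) (k : ℕ) :
    fq q s₁ k * fq q s₂ k = fq q (s₁ + s₂) k + (1 - q) * fq q (s₁ + s₂ - 1) k := by
  rcases Nat.eq_zero_or_pos k with h | hk
  · subst h
    rw [fq_zero (by linarith : s₁ ≠ 0), fq_zero (by linarith : s₁ + s₂ ≠ 0),
      fq_zero (by linarith : s₁ + s₂ - 1 ≠ 0)]
    ring
  have hx : 0 < qnum q k := qnum_pos hq0 hq1 hk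
  have key : (1 - q) * qnum q k = 1 - q ^ k := by
    rw [qnum, mul_div_cancel₀]
    · linarith
  have e1 : q ^ ((s₁ - 1) * (k:ℝ)) * q ^ ((s₂ - 1) * (k:ℝ)) = q ^ ((s₁ + s₂ - 2) * (k:ℝ)) := by
    rw [← Real.rpow_add hq0]; ring_nf
  have e2 : qnum q k ^ s₁ * qnum q k ^ s₂ = qnum q k ^ (s₁ + s₂) := (Real.rpow_add hx _ _).symm
  have e3 : q ^ ((s₁ + s₂ - 1) * (k:ℝ)) = q ^ ((s₁ + s₂ - 2) * (k:ℝ)) * q ^ k := by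
    rw [← Real.rpow_natCast q k, ← Real.rpow_add hq0]; ring_nf
  have e4 : qnum q k ^ (s₁ + s₂) = qnum q k ^ (s₁ + s₂ - 1) * qnum q k := by
    rw [← Real.rpow_add_one hx.ne']; ring_nf
  set u := q ^ ((s₁ + s₂ - 2) * (k:ℝ)) with hu
  set y := qnum q k ^ (s₁ + s₂ - 1) with hyd
  have hy : y ≠ 0 := (Real.rpow_pos_of_pos hx _).ne'
  rw [fq, fq, fq, fq, div_mul_div_comm, e1, e2, e3, e4,
    show s₁ + s₂ - 1 - 1 = s₁ + s₂ - 2 by ring]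
  have h5 : (1 - q) * (u / y) = (1 - q ^ k) * u / (y * qnum q k) := by
    rw [← key]; field_simp
  rw [h5, ← add_div]
  congr 1
  ring

end aux

noncomputable def gq (q s₁ s₂ : ℝ) (p : ℕ × ℕ) : ℝ := fq q s₁ p.1 * fq q s₂ p.2

def setA : Set (ℕ × ℕ) := {p | p.2 < p.1 ∧ 0 < p.2}
def setB : Set (ℕ × ℕ) := {p | p.1 < p.2 ∧ 0 < p.1}
def setD : Set (ℕ × ℕ) := {p | p.1 = p.2 ∧ 0 < p.1}

def eB : {p : ℕ × ℕ // p.2 < p.1 ∧ 0 < p.2} ≃ ↥setB where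
  toFun p := ⟨(p.1.2, p.1.1), p.2.1, p.2.2⟩
  invFun p := ⟨(p.1.2, p.1.1), p.2.1, p.2.2⟩
  left_inv p := rfl
  right_inv p := rfl

def eD : {k : ℕ // 0 < k} ≃ ↥setD where
  toFun k := ⟨(k.1, k.1), rfl, k.2⟩
  invFun p := ⟨p.1.1, p.2.2⟩
  left_inv k := rfl
  right_inv p := Subtype.ext (Prod.ext rfl p.2.1)

set_option maxHeartbeats 1000000 in
theorem qstuffle_depth_two (q s₁ s₂ : ℝ) (hq0 : 0 < q) (hq1 : q < 1)
    (h₁ : 1 < s₁) (h₂ : 1 < s₂) :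
    qzeta q s₁ * qzeta q s₂
      = qzeta2 q s₁ s₂ + qzeta2 q s₂ s₁ + qzeta q (s₁ + s₂)
        + (1 - q) * qzeta q (s₁ + s₂ - 1) := by
  have hf₁ := summable_fq hq0 hq1 h₁
  have hf₂ := summable_fq hq0 hq1 h₂
  have hg : Summable (gq q s₁ s₂) :=
    hf₁.mul_of_nonneg hf₂ (fq_nonneg hq0 hq1 s₁) (fq_nonneg hq0 hq1 s₂)
  have step1 : qzeta q s₁ * qzeta q s₂ = ∑' p : ℕ × ℕ, gq q s₁ s₂ p := by
    rw [qzeta_eq (by linarith : s₁ ≠ 0), qzeta_eq (by linarith : s₂ ≠ 0),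
      Summable.tsum_prod' hg (fun b =>
        show Summable (fun c => fq q s₁ b * fq q s₂ c) from hf₂.mul_left _)]
    simp only [gq]
    simp_rw [tsum_mul_left]
    rw [tsum_mul_right]
  have hsupp : Function.support (gq q s₁ s₂) ⊆ setA ∪ setB ∪ setD := by
    intro p hp
    have hne : fq q s₁ p.1 ≠ 0 ∧ fq q s₂ p.2 ≠ 0 := mul_ne_zero_iff.mp hp
    have hp1 : 0 < p.1 := by
      rcases Nat.eq_zero_or_pos p.1 with h | h
      · exact absurd (h ▸ fq_zero (by linarith : s₁ ≠ 0)) hne.1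
      · exact h
    have hp2 : 0 < p.2 := by
      rcases Nat.eq_zero_or_pos p.2 with h | h
      · exact absurd (h ▸ fq_zero (by linarith : s₂ ≠ 0)) hne.2
      · exact h
    rcases lt_trichotomy p.1 p.2 with h | h | h
    · exact Or.inl (Or.inr ⟨h, hp1⟩)
    · exact Or.inr ⟨h, hp1⟩
    · exact Or.inl (Or.inl ⟨h, hp2⟩)
  have hdisjAB : Disjoint setA setB := by
    rw [Set.disjoint_left]
    rintro p ⟨ha1, ha2⟩ ⟨hb1, hb2⟩
    omega
  have hdisjABD : Disjoint (setA ∪ setB) setD := by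
    rw [Set.disjoint_left]
    rintro p (⟨ha1, ha2⟩ | ⟨ha1, ha2⟩) ⟨hd1, hd2⟩ <;> omega
  have step2 : ∑' p : ℕ × ℕ, gq q s₁ s₂ p
      = (∑' p : setA, gq q s₁ s₂ p) + (∑' p : setB, gq q s₁ s₂ p)
        + (∑' p : setD, gq q s₁ s₂ p) := by
    rw [← tsum_subtype_eq_of_support_subset hsupp,
      Summable.tsum_union_disjoint hdisjABD (hg.subtype _) (hg.subtype _),
      Summable.tsum_union_disjoint hdisjAB (hg.subtype _) (hg.subtype _)]
  have stepA : (∑' p : setA, gq q s₁ s₂ p) = qzeta2 q s₁ s₂ := by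
    rw [qzeta2]
    apply tsum_congr
    intro p
    show fq q s₁ p.1.1 * fq q s₂ p.1.2 = _
    rw [fq, fq, div_mul_div_comm, ← Real.rpow_add hq0]
  have stepB : (∑' p : setB, gq q s₁ s₂ p) = qzeta2 q s₂ s₁ := by
    rw [← eB.tsum_eq (fun p : setB => gq q s₁ s₂ p), qzeta2]
    apply tsum_congr
    intro p
    show fq q s₁ p.1.2 * fq q s₂ p.1.1 = _
    rw [fq, fq, div_mul_div_comm, ← Real.rpow_add hq0,
      mul_comm (qnum q p.1.2 ^ s₁) (qnum q p.1.1 ^ s₂),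
      show (s₁ - 1) * (p.1.2 : ℝ) + (s₂ - 1) * (p.1.1 : ℝ)
        = (s₂ - 1) * (p.1.1 : ℝ) + (s₁ - 1) * (p.1.2 : ℝ) by ring]
  have stepD : (∑' p : setD, gq q s₁ s₂ p)
      = qzeta q (s₁ + s₂) + (1 - q) * qzeta q (s₁ + s₂ - 1) := by
    rw [← eD.tsum_eq (fun p : setD => gq q s₁ s₂ p)]
    have hterm : ∀ k : {k : ℕ // 0 < k},
        gq q s₁ s₂ (eD k) = fq q (s₁ + s₂) k.1 + (1 - q) * fq q (s₁ + s₂ - 1) k.1 :=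
      fun k => diag_eq q s₁ s₂ hq0 hq1 h₁ h₂ k.1
    rw [tsum_congr hterm]
    have hS : Summable (fq q (s₁ + s₂)) := summable_fq hq0 hq1 (by linarith)
    have hS' : Summable (fq q (s₁ + s₂ - 1)) := summable_fq hq0 hq1 (by linarith)
    have hsub : ∀ (s : ℝ), s ≠ 0 →
        (∑' k : {k : ℕ // 0 < k}, fq q s k.1) = ∑' k : ℕ, fq q s k := by
      intro s hs
      apply tsum_subtype_eq_of_support_subset (s := {k : ℕ | 0 < k})
      intro k hk
      rcases Nat.eq_zero_or_pos k with h | h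
      · exact absurd (h ▸ fq_zero hs) hk
      · exact h
    rw [Summable.tsum_add (f := fun k : {k : ℕ // 0 < k} => fq q (s₁ + s₂) k.1)
        (g := fun k : {k : ℕ // 0 < k} => (1 - q) * fq q (s₁ + s₂ - 1) k.1)
        (hS.subtype _) ((hS'.subtype _).mul_left (1 - q)),
      tsum_mul_left, hsub (s₁ + s₂) (by linarith), hsub (s₁ + s₂ - 1) (by linarith),
      qzeta_eq (by linarith : s₁ + s₂ ≠ 0), qzeta_eq (by linarith : s₁ + s₂ - 1 ≠ 0)]
  rw [step1, step2, stepA, stepB, stepD]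
  ring
end

section
/- Let 0 < q < 1 and let k \ge 1 be an integer. Define \widetilde{\zeta}[k] := \sum_{n=1}^\infty q^{kn}/[n]_q^k and \zeta[j] := \sum_{n=1}^\infty q^{(j-1)n}/[n]_q^j for j \ge 2. Then \widetilde{\zeta}[k] = (q-1)^{k-1}\widetilde{\zeta}[1] + \sum_{j=2}^k (q-1)^{k-j}\zeta[j]. -/
noncomputable def qzetaTilde (q : ℝ) (k : ℕ) : ℝ :=
  ∑' n : ℕ+, q ^ (k * (n : ℕ)) / (qnum q n) ^ k

noncomputable def qz (q : ℝ) (j : ℕ) : ℝ :=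
  ∑' n : ℕ+, q ^ ((j - 1) * (n : ℕ)) / (qnum q n) ^ j

lemma qnum_ge_one (q : ℝ) (hq0 : 0 < q) (hq1 : q < 1) (n : ℕ+) : 1 ≤ qnum q n := by
  have h1 : q ^ (n : ℕ) ≤ q := by
    calc q ^ (n : ℕ) ≤ q ^ 1 := pow_le_pow_of_le_one hq0.le hq1.le n.one_le
    _ = q := pow_one q
  rw [qnum, le_div_iff₀ (by linarith)]
  linarith

lemma summable_aux (q : ℝ) (hq0 : 0 < q) (hq1 : q < 1) (m k : ℕ) (hm : 1 ≤ m) :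
    Summable (fun n : ℕ+ => q ^ (m * (n : ℕ)) / (qnum q n) ^ k) := by
  have hg : Summable (fun n : ℕ+ => q ^ (n : ℕ)) := by
    have : Summable (fun n : ℕ => q ^ n) := summable_geometric_of_lt_one hq0.le hq1
    exact this.comp_injective (fun a b h => PNat.coe_injective h)
  refine Summable.of_nonneg_of_le (fun n => ?_) (fun n => ?_) hg
  · exact div_nonneg (pow_nonneg hq0.le _)
      (pow_nonneg (by linarith [qnum_ge_one q hq0 hq1 n]) k)
  · have hd : (1 : ℝ) ≤ (qnum q n) ^ k := one_le_pow₀ (qnum_ge_one q hq0 hq1 n)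
    have h2 : q ^ (m * (n : ℕ)) ≤ q ^ (n : ℕ) := by
      apply pow_le_pow_of_le_one hq0.le hq1.le
      exact Nat.le_mul_of_pos_left _ hm
    exact (div_le_self (pow_nonneg hq0.le _) hd).trans h2

lemma qzt_step (q : ℝ) (hq0 : 0 < q) (hq1 : q < 1) (k : ℕ) (hk : 1 ≤ k) :
    qzetaTilde q (k + 1) = (q - 1) * qzetaTilde q k + qz q (k + 1) := by
  have hc := summable_aux q hq0 hq1 k k hk
  have hb := summable_aux q hq0 hq1 k (k + 1) hk
  rw [qzetaTilde, qzetaTilde, qz]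
  simp only [Nat.add_sub_cancel]
  have key : ∀ n : ℕ+, q ^ ((k + 1) * (n : ℕ)) / (qnum q n) ^ (k + 1)
      = (q - 1) * (q ^ (k * (n : ℕ)) / (qnum q n) ^ k)
        + q ^ (k * (n : ℕ)) / (qnum q n) ^ (k + 1) := by
    intro n
    have h1q : (1 : ℝ) - q ≠ 0 := by linarith
    have hd0 : qnum q n ≠ 0 := by
      have := qnum_ge_one q hq0 hq1 n; linarith
    have hd : (q - 1) * qnum q n = q ^ (n : ℕ) - 1 := by
      rw [qnum]; field_simp; ring
    have e1 : (k + 1) * (n : ℕ) = k * (n : ℕ) + (n : ℕ) := by ring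
    rw [e1, pow_add, pow_succ, mul_div_assoc', div_add_div _ _ (pow_ne_zero k hd0)
      (mul_ne_zero (pow_ne_zero k hd0) hd0)]
    rw [div_eq_div_iff (mul_ne_zero (pow_ne_zero k hd0) hd0)
      (mul_ne_zero (pow_ne_zero k hd0) (mul_ne_zero (pow_ne_zero k hd0) hd0))]
    ring_nf
    linear_combination (-(q ^ (k * (n : ℕ)) * (qnum q (n : ℕ)) ^ (2 * k + 1))) * hd
  rw [tsum_congr key]
  rw [Summable.tsum_add ((hc.mul_left (q - 1)).congr (fun n => rfl)) hb, tsum_mul_left]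

theorem qzetaTilde_telescoped (q : ℝ) (hq0 : 0 < q) (hq1 : q < 1)
    (k : ℕ) (hk : 1 ≤ k) :
    qzetaTilde q k
      = (q - 1) ^ (k - 1) * qzetaTilde q 1
        + ∑ j ∈ Finset.Icc 2 k, (q - 1) ^ (k - j) * qz q j := by
  induction k, hk using Nat.le_induction with
  | base => simp
  | succ k hk ih =>
    rw [qzt_step q hq0 hq1 k hk, ih]
    rw [show Finset.Icc 2 (k + 1) = Finset.Icc 2 k ∪ {k + 1} from ?_]
    · rw [Finset.sum_union (by simp)]
      simp only [Finset.sum_singleton, Nat.sub_self, pow_zero, one_mul]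
      rw [mul_add, Finset.mul_sum]
      have h1 : (q - 1) * (q - 1) ^ (k - 1) = (q - 1) ^ (k + 1 - 1) := by
        rw [Nat.add_sub_cancel, ← pow_succ']
        congr 1
        omega
      have h2 : ∀ j ∈ Finset.Icc 2 k,
          (q - 1) * ((q - 1) ^ (k - j) * qz q j) = (q - 1) ^ (k + 1 - j) * qz q j := by
        intro j hj
        simp only [Finset.mem_Icc] at hj
        rw [← mul_assoc, ← pow_succ']
        congr 2
        omega
      rw [Finset.sum_congr rfl h2, ← mul_assoc, h1]
      ring
    · ext x
      simp [Finset.mem_Icc, Finset.mem_union]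
      omega
end
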